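/- Let γ ∈ (0,1) and define p_t(b) by p₁(b) = (γb/(γb+1))^γ and p_t(b) = [ p_{t-1}(γb+1) · γb / (γb + 1 - p_{t-1}(γb+1)) ]^γ. Then for every b₀ > 0, p_t(b₀) → 1 as t → ∞. -/

import Mathlib

set_option maxHeartbeats 1000000

open Filter Finset Real Topology

theorem pgss_p_tendsto_one (γ : ℝ) (hγ0 : 0 < γ) (hγ1 : γ < 1)
    (p : ℕ → ℝ → ℝ)
    (h1 : ∀ b : ℝ, 0 < b → p 1 b = (γ * b / (γ * b + 1)) ^ γ)
    (hrec : ∀ t : ℕ, 1 ≤ t → ∀ b : ℝ, 0 < b →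
      p (t + 1) b = (p t (γ * b + 1) * (γ * b) / (γ * b + 1 - p t (γ * b + 1))) ^ γ) :
    ∀ b0 : ℝ, 0 < b0 → Filter.Tendsto (fun t => p t b0) Filter.atTop (nhds 1) := by
  have hγ : (0:ℝ) < 1 - γ := by linarith
  have hγne : γ ≠ 0 := ne_of_gt hγ0
  -- basic bounds on p
  have hpb : ∀ t, 1 ≤ t → ∀ b : ℝ, 0 < b → 0 < p t b ∧ p t b < 1 := by
    intro t ht
    induction t, ht using Nat.le_induction with
    | base =>
      intro b hb
      have hgb : 0 < γ * b := mul_pos hγ0 hb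
      have h01 : 0 < γ * b / (γ * b + 1) := div_pos hgb (by linarith)
      have h11 : γ * b / (γ * b + 1) < 1 := (div_lt_one (by linarith)).2 (by linarith)
      rw [h1 b hb]
      exact ⟨Real.rpow_pos_of_pos h01 γ, Real.rpow_lt_one h01.le h11 hγ0⟩
    | succ t ht ih =>
      intro b hb
      have hgb : 0 < γ * b := mul_pos hγ0 hb
      have hb1 : 0 < γ * b + 1 := by linarith
      obtain ⟨hP0, hP1⟩ := ih (γ * b + 1) hb1
      have hD : 0 < γ * b + 1 - p t (γ * b + 1) := by linarith
      have hin : 0 < p t (γ * b + 1) * (γ * b) / (γ * b + 1 - p t (γ * b + 1)) :=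
        div_pos (mul_pos hP0 hgb) hD
      have hin1 : p t (γ * b + 1) * (γ * b) / (γ * b + 1 - p t (γ * b + 1)) < 1 := by
        rw [div_lt_one hD]; nlinarith
      rw [hrec t ht b hb]
      exact ⟨Real.rpow_pos_of_pos hin γ, Real.rpow_lt_one hin.le hin1 hγ0⟩
  -- the substitution w
  set w : ℕ → ℝ → ℝ := fun t b => p t b ^ (-(1/γ)) - 1 with hwdef
  have hw1 : ∀ b : ℝ, 0 < b → w 1 b = 1/(γ*b) := by
    intro b hb
    have hgb : 0 < γ * b := mul_pos hγ0 hb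
    have h01 : 0 < γ * b / (γ * b + 1) := div_pos hgb (by linarith)
    simp only [hwdef]
    rw [h1 b hb, ← Real.rpow_mul h01.le]
    rw [show γ * (-(1/γ)) = -1 by field_simp]
    rw [Real.rpow_neg_one, inv_div]
    field_simp
    ring
  have hw0 : ∀ t, 1 ≤ t → ∀ b : ℝ, 0 < b → 0 ≤ w t b := by
    intro t ht b hb
    obtain ⟨hp0, hp1⟩ := hpb t ht b hb
    simp only [hwdef, sub_nonneg]
    rw [Real.rpow_neg hp0.le]
    have h2 : p t b ^ (1/γ) ≤ 1 := Real.rpow_le_one hp0.le hp1.le (by positivity)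
    have h3 : 0 < p t b ^ (1/γ) := Real.rpow_pos_of_pos hp0 _
    rw [le_inv_comm₀ one_pos h3]
    simpa using h2
  have hwrec : ∀ t, 1 ≤ t → ∀ b : ℝ, 0 < b →
      w (t+1) b = (1 + 1/(γ*b)) * ((1 + w t (γ*b+1))^γ - 1) := by
    intro t ht b hb
    have hgb : 0 < γ * b := mul_pos hγ0 hb
    have hb1 : 0 < γ * b + 1 := by linarith
    obtain ⟨hP0, hP1⟩ := hpb t ht (γ*b+1) hb1
    have hD : 0 < γ * b + 1 - p t (γ * b + 1) := by linarith
    have hin : 0 < p t (γ * b + 1) * (γ * b) / (γ * b + 1 - p t (γ * b + 1)) :=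
      div_pos (mul_pos hP0 hgb) hD
    have e1 : w (t+1) b = (p t (γ * b + 1) * (γ * b) / (γ * b + 1 - p t (γ * b + 1)))⁻¹ - 1 := by
      simp only [hwdef]
      rw [hrec t ht b hb, ← Real.rpow_mul hin.le, show γ * (-(1/γ)) = -1 by field_simp,
        Real.rpow_neg_one]
    have e2 : (1 + w t (γ*b+1))^γ = (p t (γ*b+1))⁻¹ := by
      simp only [hwdef]
      rw [show (1 + (p t (γ*b+1) ^ (-(1/γ)) - 1)) = p t (γ*b+1) ^ (-(1/γ)) by ring]
      rw [← Real.rpow_mul hP0.le, show -(1/γ) * γ = -1 by field_simp, Real.rpow_neg_one]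
    rw [e1, e2]
    field_simp
    ring
  -- Bernoulli helpers
  have hber : ∀ u : ℝ, 0 ≤ u → (1 + u)^γ - 1 ≤ γ * u := by
    intro u hu
    have := rpow_one_add_le_one_add_mul_self (s := u) (by linarith) hγ0.le hγ1.le
    linarith
  have hber_lt : ∀ u : ℝ, 0 < u → (1 + u)^γ < 1 + γ * u := by
    intro u hu
    exact rpow_one_add_lt_one_add_mul_self (by linarith) (ne_of_gt hu) hγ0 hγ1
  have hFnn : ∀ u : ℝ, 0 ≤ u → 0 ≤ (1 + u)^γ - 1 := by
    intro u hu
    have h0 : (1:ℝ) = 1 ^ γ := (Real.one_rpow γ).symm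
    have := Real.rpow_le_rpow zero_le_one (by linarith : (1:ℝ) ≤ 1 + u) hγ0.le
    rw [Real.one_rpow] at this
    linarith
  -- concavity: decreasing ratio of F(u) = (1+u)^γ - 1
  have hconc : ∀ ε u : ℝ, 0 < ε → ε ≤ u → ((1+u)^γ - 1) * ε ≤ ((1+ε)^γ - 1) * u := by
    intro ε u hε hεu
    have hu : 0 < u := lt_of_lt_of_le hε hεu
    set a : ℝ := ε / u with ha
    have hau : a * u = ε := div_mul_cancel₀ ε hu.ne'
    have ha0 : 0 ≤ a := by positivity
    have ha1 : a ≤ 1 := by rw [ha, div_le_one hu]; exact hεu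
    have hcon := (Real.concaveOn_rpow hγ0.le hγ1.le).2
      (Set.mem_Ici.2 (by linarith : (0:ℝ) ≤ 1 + u)) (Set.mem_Ici.2 zero_le_one)
      ha0 (by linarith : 0 ≤ 1 - a) (by ring)
    simp only [smul_eq_mul, mul_one, Real.one_rpow] at hcon
    have hx : a * (1 + u) + (1 - a) = 1 + ε := by linear_combination hau
    rw [hx] at hcon
    -- hcon : a * (1+u)^γ + (1-a) ≤ (1+ε)^γ
    have h2 : (a * (1+u)^γ + (1-a)) * u ≤ (1+ε)^γ * u := mul_le_mul_of_nonneg_right hcon hu.le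
    have expand : (a * (1+u)^γ + (1-a)) * u = ((1+u)^γ - 1) * ε + u := by
      linear_combination ((1+u)^γ - 1) * hau
    nlinarith
  -- now fix b0
  intro b0 hb0
  set bst : ℝ := 1/(1-γ) with hbstdef
  have hbstpos : 0 < bst := by positivity
  have hbsteq : γ * bst + 1 = bst := by
    rw [hbstdef]; field_simp; ring
  set bm : ℝ := min b0 bst with hbmdef
  have hbmpos : 0 < bm := lt_min hb0 hbstpos
  set B : ℕ → ℝ := fun j => bst + γ^j * (b0 - bst) with hBdef
  have hB0 : B 0 = b0 := by simp [hBdef]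
  have hBrec : ∀ j, γ * B j + 1 = B (j+1) := by
    intro j
    simp only [hBdef]
    calc γ * (bst + γ^j*(b0-bst)) + 1 = (γ*bst+1) + γ^(j+1)*(b0-bst) := by ring
    _ = bst + γ^(j+1)*(b0-bst) := by rw [hbsteq]
  have hBb : ∀ j, bm ≤ B j := by
    intro j
    have h1j : γ^j ≤ 1 := pow_le_one₀ hγ0.le hγ1.le
    have h0j : (0:ℝ) < γ^j := pow_pos hγ0 j
    have e : B j - bm = (1-γ^j)*(bst-bm) + γ^j*(b0-bm) := by simp only [hBdef]; ring
    nlinarith [min_le_left b0 bst, min_le_right b0 bst]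
  have hBpos : ∀ j, 0 < B j := fun j => lt_of_lt_of_le hbmpos (hBb j)
  set c0 : ℝ := (1-γ) * |b0 - bst| / bm with hc0def
  have hc00 : 0 ≤ c0 := by positivity
  set A : ℕ → ℝ := fun j => 1 + c0 * γ^j with hAdef
  have hA1 : ∀ j, 1 ≤ A j := by
    intro j
    simp only [hAdef]
    nlinarith [pow_pos hγ0 j]
  have hstep : ∀ j, γ * (1 + 1/(γ * B j)) ≤ A j := by
    intro j
    have hBj := hBpos j
    have hgBj : 0 < γ * B j := mul_pos hγ0 hBj
    have h0j : (0:ℝ) < γ^j := pow_pos hγ0 j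
    have key : γ * (1 + 1/(γ * B j)) = 1 + (1-γ)*(γ^j*(bst - b0))/(B j) := by
      have hb1 : (1-γ) * bst = 1 := by rw [hbstdef]; field_simp
      have e2 : bst - B j = γ^j*(bst - b0) := by simp only [hBdef]; ring
      rw [← e2]
      field_simp
      nlinarith [hb1]
    rw [key]
    simp only [hAdef]
    rcases le_total (bst - b0) 0 with hsgn | hsgn
    · have h2 : (0:ℝ) ≤ (1-γ)*γ^j := by positivity
      have h3 : (1-γ)*γ^j*(bst-b0) ≤ 0 := mul_nonpos_of_nonneg_of_nonpos h2 hsgn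
      have : (1-γ)*(γ^j*(bst-b0))/(B j) ≤ 0 := by
        apply div_nonpos_of_nonpos_of_nonneg _ hBj.le
        nlinarith [h3]
      nlinarith
    · have habs : |b0 - bst| = bst - b0 := by
        rw [abs_sub_comm]; exact abs_of_nonneg hsgn
      have hnum : 0 ≤ (1-γ)*(γ^j*(bst-b0)) := by positivity
      have hdiv : (1-γ)*(γ^j*(bst-b0))/(B j) ≤ (1-γ)*(γ^j*(bst-b0))/bm :=
        div_le_div_of_nonneg_left hnum hbmpos (hBb j)
      have : (1-γ)*(γ^j*(bst-b0))/bm = c0 * γ^j := by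
        rw [hc0def, habs]; ring
      linarith [hdiv.trans_eq this]
  -- product bound
  have hsum : ∀ j s : ℕ, ∑ i ∈ Finset.range s, c0 * γ^(j+i) ≤ c0/(1-γ) := by
    intro j s
    have hrw : ∀ i ∈ Finset.range s, c0 * γ^(j+i) = (c0*γ^j) * γ^i := by
      intro i _; rw [pow_add]; ring
    rw [Finset.sum_congr rfl hrw, ← Finset.mul_sum]
    have hgeo : ∑ i ∈ Finset.range s, γ^i = (γ^s - 1)/(γ - 1) := geom_sum_eq (ne_of_lt hγ1) s
    have hsnn : (0:ℝ) ≤ ∑ i ∈ Finset.range s, γ^i :=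
      Finset.sum_nonneg fun i _ => (pow_pos hγ0 i).le
    have hsle : ∑ i ∈ Finset.range s, γ^i ≤ 1/(1-γ) := by
      rw [hgeo]
      have e : (γ^s - 1)/(γ-1) = (1-γ^s)/(1-γ) := by
        rw [div_eq_div_iff (by linarith) (by linarith)]; ring
      rw [e]
      gcongr
      nlinarith [pow_pos hγ0 s]
    have h1j : γ^j ≤ 1 := pow_le_one₀ hγ0.le hγ1.le
    have h0j : (0:ℝ) ≤ γ^j := (pow_pos hγ0 j).le
    calc (c0*γ^j) * ∑ i ∈ Finset.range s, γ^i ≤ (c0*γ^j) * (1/(1-γ)) := by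
          apply mul_le_mul_of_nonneg_left hsle (by positivity)
    _ ≤ c0 * (1/(1-γ)) := by
          apply mul_le_mul_of_nonneg_right _ (by positivity)
          nlinarith
    _ = c0/(1-γ) := by ring
  have hprodA : ∀ j s, (∏ i ∈ Finset.range s, A (j+i)) ≤ Real.exp (c0/(1-γ)) := by
    intro j s
    calc (∏ i ∈ Finset.range s, A (j+i)) ≤ ∏ i ∈ Finset.range s, Real.exp (c0*γ^(j+i)) := by
          apply Finset.prod_le_prod
          · intro i _; linarith [hA1 (j+i)]
          · intro i _
            simp only [hAdef]
            linarith [Real.add_one_le_exp (c0*γ^(j+i))]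
    _ = Real.exp (∑ i ∈ Finset.range s, c0*γ^(j+i)) := (Real.exp_sum _ _).symm
    _ ≤ Real.exp (c0/(1-γ)) := Real.exp_le_exp.2 (hsum j s)
  set P0 : ℝ := Real.exp (c0/(1-γ)) with hP0def
  have hP0one : 1 ≤ P0 := by
    rw [hP0def]
    have := Real.add_one_le_exp (c0/(1-γ))
    have : 0 ≤ c0/(1-γ) := by positivity
    nlinarith [Real.add_one_le_exp (c0/(1-γ))]
  have hP0pos : 0 < P0 := lt_of_lt_of_le one_pos hP0one
  set W : ℝ := P0 * (1/(γ*bm)) with hWdef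
  have hWpos : 0 < W := by
    rw [hWdef]; positivity
  -- uniform bound on w along the orbit
  have hWlem : ∀ t j, w (t+1) (B j) ≤ (∏ i ∈ Finset.range t, A (j+i)) * (1/(γ*bm)) := by
    intro t
    induction t with
    | zero =>
      intro j
      rw [hw1 (B j) (hBpos j)]
      simp only [Finset.range_zero, Finset.prod_empty, one_mul]
      rw [div_le_div_iff₀ (mul_pos hγ0 (hBpos j)) (mul_pos hγ0 hbmpos)]
      nlinarith [hBb j, hbmpos]
    | succ t ih =>
      intro j
      have hrw := hwrec (t+1) (by omega) (B j) (hBpos j)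
      rw [hBrec j] at hrw
      have hu0 : 0 ≤ w (t+1) (B (j+1)) := hw0 (t+1) (by omega) _ (hBpos (j+1))
      have hun : (1 + w (t+1) (B (j+1)))^γ - 1 ≤ γ * w (t+1) (B (j+1)) := hber _ hu0
      have hα : (0:ℝ) < 1 + 1/(γ * B j) := by
        have := mul_pos hγ0 (hBpos j); positivity
      have hFnn' : 0 ≤ (1 + w (t+1) (B (j+1)))^γ - 1 := hFnn _ hu0
      calc w (t+1+1) (B j) = (1 + 1/(γ*B j)) * ((1 + w (t+1) (B (j+1)))^γ - 1) := hrw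
      _ ≤ (1 + 1/(γ*B j)) * (γ * w (t+1) (B (j+1))) := mul_le_mul_of_nonneg_left hun hα.le
      _ = (γ * (1 + 1/(γ*B j))) * w (t+1) (B (j+1)) := by ring
      _ ≤ A j * w (t+1) (B (j+1)) := mul_le_mul_of_nonneg_right (hstep j) hu0
      _ ≤ A j * ((∏ i ∈ Finset.range t, A (j+1+i)) * (1/(γ*bm))) :=
          mul_le_mul_of_nonneg_left (ih (j+1)) (le_trans zero_le_one (hA1 j))
      _ = (∏ i ∈ Finset.range (t+1), A (j+i)) * (1/(γ*bm)) := by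
          rw [Finset.prod_range_succ']
          have : ∀ i ∈ Finset.range t, A (j+1+i) = A (j+(i+1)) := by
            intro i _; congr 1; omega
          rw [Finset.prod_congr rfl this]
          simp only [Nat.add_zero]
          ring
  have hWb : ∀ t j, w (t+1) (B j) ≤ W := by
    intro t j
    refine le_trans (hWlem t j) ?_
    rw [hWdef]
    exact mul_le_mul_of_nonneg_right (hprodA j t) (by positivity)
  -- main contraction lemma
  have main : ∀ ε : ℝ, 0 < ε →
      ∀ s j m : ℕ, w (s+1+m) (B j) ≤ (∏ i ∈ Finset.range s, A (j+i)) *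
        max ε ((((1+ε)^γ - 1)/(γ*ε))^s * W) := by
    intro ε hε
    set k : ℝ := ((1+ε)^γ - 1)/(γ*ε) with hkdef
    have hk0 : 0 ≤ k := by
      rw [hkdef]
      exact div_nonneg (hFnn ε hε.le) (by positivity)
    have hk1 : k < 1 := by
      rw [hkdef, div_lt_one (by positivity)]
      have := hber_lt ε hε
      linarith
    have hFk : ∀ u : ℝ, ε ≤ u → (1+u)^γ - 1 ≤ γ * k * u := by
      intro u hu
      have h := hconc ε u hε hu
      rw [hkdef]
      rw [show γ * (((1+ε)^γ - 1)/(γ*ε)) * u = ((1+ε)^γ - 1) * u / ε by field_simp]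
      rw [le_div_iff₀ hε]
      linarith
    intro s
    induction s with
    | zero =>
      intro j m
      simp only [Finset.range_zero, Finset.prod_empty, one_mul, pow_zero]
      refine le_trans ?_ (le_max_right _ _)
      have hidx : (0:ℕ)+1+m = m+1 := by omega
      rw [hidx]
      exact hWb m j
    | succ s ih =>
      intro j m
      have hrw := hwrec (s+1+m) (by omega) (B j) (hBpos j)
      rw [hBrec j] at hrw
      have hgoal_eq : s+1+1+m = (s+1+m)+1 := by omega
      set u := w (s+1+m) (B (j+1)) with hudef
      have hu0 : 0 ≤ u := hw0 (s+1+m) (by omega) _ (hBpos (j+1))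
      have hα : (0:ℝ) < 1 + 1/(γ * B j) := by
        have := mul_pos hγ0 (hBpos j); positivity
      have hA0 : (0:ℝ) < A j := lt_of_lt_of_le one_pos (hA1 j)
      have hPr1 : (1:ℝ) ≤ ∏ i ∈ Finset.range s, A (j+1+i) := by
        have := Finset.prod_le_prod (s := Finset.range s) (f := fun _ => (1:ℝ))
          (g := fun i => A (j+1+i)) (fun i _ => zero_le_one) (fun i _ => hA1 (j+1+i))
        simpa using this
      have hPr0 : (0:ℝ) ≤ ∏ i ∈ Finset.range s, A (j+1+i) := le_trans zero_le_one hPr1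
      have hprod_rw : (∏ i ∈ Finset.range (s+1), A (j+i)) =
          A j * ∏ i ∈ Finset.range s, A (j+1+i) := by
        rw [Finset.prod_range_succ']
        have : ∀ i ∈ Finset.range s, A (j+(i+1)) = A (j+1+i) := by
          intro i _; congr 1; omega
        rw [Finset.prod_congr rfl this]
        simp only [Nat.add_zero]
        ring
      have hmax_pos : 0 < max ε (k^s * W) := lt_max_of_lt_left hε
      have hIH : u ≤ (∏ i ∈ Finset.range s, A (j+1+i)) * max ε (k^s * W) := ih (j+1) m
      have hmax_step : k * max ε (k^s * W) ≤ max ε (k^(s+1) * W) := by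
        rcases le_total ε (k^s * W) with hc | hc
        · rw [max_eq_right hc]
          refine le_trans (le_of_eq ?_) (le_max_right _ _)
          rw [pow_succ]; ring
        · rw [max_eq_left hc]
          refine le_trans ?_ (le_max_left _ _)
          nlinarith
      have hwval : w (s+1+1+m) (B j) = (1 + 1/(γ*B j)) * ((1 + u)^γ - 1) := by
        rw [hgoal_eq]; exact hrw
      rcases le_or_gt u ε with hcase | hcase
      · -- u small
        have hF : (1+u)^γ - 1 ≤ γ * u := hber u hu0
        calc w (s+1+1+m) (B j) = (1 + 1/(γ*B j)) * ((1 + u)^γ - 1) := hwval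
        _ ≤ (1 + 1/(γ*B j)) * (γ * u) := mul_le_mul_of_nonneg_left hF hα.le
        _ = (γ * (1 + 1/(γ*B j))) * u := by ring
        _ ≤ A j * u := mul_le_mul_of_nonneg_right (hstep j) hu0
        _ ≤ A j * ε := mul_le_mul_of_nonneg_left hcase hA0.le
        _ ≤ A j * max ε (k^(s+1) * W) := mul_le_mul_of_nonneg_left (le_max_left _ _) hA0.le
        _ ≤ (A j * ∏ i ∈ Finset.range s, A (j+1+i)) * max ε (k^(s+1) * W) := by
            have h2 : (0:ℝ) ≤ max ε (k^(s+1) * W) := le_trans hε.le (le_max_left _ _)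
            have h3 : A j ≤ A j * ∏ i ∈ Finset.range s, A (j+1+i) := by nlinarith [hA0, hPr1]
            exact mul_le_mul_of_nonneg_right h3 h2
        _ = (∏ i ∈ Finset.range (s+1), A (j+i)) * max ε (k^(s+1) * W) := by
            rw [hprod_rw]
      · -- u large
        have hF : (1+u)^γ - 1 ≤ γ * k * u := hFk u hcase.le
        have hku : 0 ≤ k * u := mul_nonneg hk0 hu0
        calc w (s+1+1+m) (B j) = (1 + 1/(γ*B j)) * ((1 + u)^γ - 1) := hwval
        _ ≤ (1 + 1/(γ*B j)) * (γ * k * u) := by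
            apply mul_le_mul_of_nonneg_left hF hα.le
        _ = (γ * (1 + 1/(γ*B j))) * (k * u) := by ring
        _ ≤ A j * (k * u) := mul_le_mul_of_nonneg_right (hstep j) hku
        _ ≤ A j * (k * ((∏ i ∈ Finset.range s, A (j+1+i)) * max ε (k^s * W))) := by
            apply mul_le_mul_of_nonneg_left _ hA0.le
            exact mul_le_mul_of_nonneg_left hIH hk0
        _ = (A j * ∏ i ∈ Finset.range s, A (j+1+i)) * (k * max ε (k^s * W)) := by ring
        _ ≤ (A j * ∏ i ∈ Finset.range s, A (j+1+i)) * max ε (k^(s+1) * W) := by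
            apply mul_le_mul_of_nonneg_left hmax_step
            positivity
        _ = (∏ i ∈ Finset.range (s+1), A (j+i)) * max ε (k^(s+1) * W) := by
            rw [hprod_rw]
  -- conclude: w t b0 → 0
  have hward : ∀ e : ℝ, 0 < e → ∃ N : ℕ, ∀ t, N ≤ t → w t b0 < e := by
    intro e he
    set ε : ℝ := e/(2*P0) with hεdef
    have hε : 0 < ε := by rw [hεdef]; positivity
    set k : ℝ := ((1+ε)^γ - 1)/(γ*ε) with hkdef
    have hk0 : 0 ≤ k := div_nonneg (hFnn ε hε.le) (by positivity)
    have hk1 : k < 1 := by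
      rw [hkdef, div_lt_one (by positivity)]
      have := hber_lt ε hε
      linarith
    obtain ⟨s, hs⟩ := exists_pow_lt_of_lt_one (show (0:ℝ) < ε/W by positivity) hk1
    have hmax : max ε (k^s * W) = ε := by
      apply max_eq_left
      exact ((lt_div_iff₀ hWpos).1 hs).le
    refine ⟨s+1, ?_⟩
    intro t ht
    obtain ⟨m, rfl⟩ : ∃ m, t = s+1+m := ⟨t - (s+1), by omega⟩
    have hmain := main ε hε s 0 m
    rw [hB0, hmax] at hmain
    have hb : (∏ i ∈ Finset.range s, A (0+i)) * ε ≤ P0 * ε :=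
      mul_le_mul_of_nonneg_right (hprodA 0 s) hε.le
    have : P0 * ε = e/2 := by
      rw [hεdef]; field_simp
    calc w (s+1+m) b0 ≤ P0 * ε := le_trans hmain hb
    _ = e/2 := this
    _ < e := by linarith
  have hwt : Tendsto (fun t => w t b0) atTop (𝓝 0) := by
    rw [Metric.tendsto_atTop]
    intro e he
    obtain ⟨N, hN⟩ := hward e he
    refine ⟨max N 1, fun t ht => ?_⟩
    rw [Real.dist_eq, sub_zero,
      abs_of_nonneg (hw0 t (le_trans (le_max_right N 1) ht) b0 hb0)]
    exact hN t (le_trans (le_max_left N 1) ht)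
  -- recover p from w
  have hp_eq : ∀ t, 1 ≤ t → p t b0 = (1 + w t b0)^(-γ) := by
    intro t ht
    have hp0 := (hpb t ht b0 hb0).1
    simp only [hwdef]
    rw [show (1 + (p t b0 ^ (-(1/γ)) - 1)) = p t b0 ^ (-(1/γ)) by ring]
    rw [← Real.rpow_mul hp0.le, show -(1/γ) * (-γ) = 1 by field_simp, Real.rpow_one]
  have h1w : Tendsto (fun t => 1 + w t b0) atTop (𝓝 1) := by
    have := tendsto_const_nhds (x := (1:ℝ)) (f := atTop (α := ℕ)) |>.add hwt
    simpa using this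
  have hlim : Tendsto (fun t => (1 + w t b0)^(-γ)) atTop (𝓝 1) := by
    have := h1w.rpow_const (p := -γ) (Or.inl one_ne_zero)
    simpa using this
  apply hlim.congr'
  filter_upwards [eventually_ge_atTop 1] with t ht
  exact (hp_eq t ht).symm
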